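/- The function λ_i is subadditive: λ_i(a+b) ≤ λ_i(a) + λ_i(b) for all a, b ≥ 0. Moreover, quantitatively, for all 0 ≤ a ≤ b one has λ_i(a) + λ_i(b) − λ_i(a+b) ≥ T²·a·b² / (2·(1+T+T·(a+b)²)²). -/

import Mathlib

set_option maxHeartbeats 1000000


open Real

/-- `u(r) = (1-ε)+(T-ε)r²`. -/
noncomputable def uu (ε T r : ℝ) : ℝ := (1 - ε) + (T - ε) * r ^ 2

/-- The ion dispersion relation `λ_i`. -/
noncomputable def lamI (ε T r : ℝ) : ℝ :=
  (Real.sqrt ε)⁻¹ *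
    Real.sqrt (((1 + ε) + (T + ε) * r ^ 2 - Real.sqrt ((uu ε T r) ^ 2 + 4 * ε)) / 2)

/-- The electron dispersion relation `λ_e`. -/
noncomputable def lamE (ε T r : ℝ) : ℝ :=
  (Real.sqrt ε)⁻¹ *
    Real.sqrt (((1 + ε) + (T + ε) * r ^ 2 + Real.sqrt ((uu ε T r) ^ 2 + 4 * ε)) / 2)

/-- `H₁(r) = √(1+r²)`. -/
noncomputable def H1 (r : ℝ) : ℝ := Real.sqrt (1 + r ^ 2)

/-- `H_ε(r) = ε^{-1/2}√(1+Tr²)`. -/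
noncomputable def Heps (ε T r : ℝ) : ℝ := (Real.sqrt ε)⁻¹ * Real.sqrt (1 + T * r ^ 2)


noncomputable def VV (ε T r : ℝ) : ℝ := Real.sqrt ((uu ε T r) ^ 2 + 4 * ε)
noncomputable def DD (ε T r : ℝ) : ℝ := (1 + ε) + (T + ε) * r ^ 2 + VV ε T r
noncomputable def qq (ε T r : ℝ) : ℝ := Real.sqrt (2 * (1 + T + T * r ^ 2) / DD ε T r)

section
variable {ε T : ℝ}

lemma uu_ge (hε : 0 < ε) (hε' : ε ≤ 1 / 1000) (hT : 1 ≤ T) (r : ℝ) :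
    1 - ε ≤ uu ε T r := by
  have h : 0 ≤ (T - ε) * r ^ 2 := mul_nonneg (by nlinarith) (sq_nonneg r)
  unfold uu; linarith

lemma uu_pos (hε : 0 < ε) (hε' : ε ≤ 1 / 1000) (hT : 1 ≤ T) (r : ℝ) :
    0 < uu ε T r := by
  have := uu_ge hε hε' hT r; linarith

lemma VV_lb (hε : 0 < ε) (hε' : ε ≤ 1 / 1000) (hT : 1 ≤ T) (r : ℝ) :
    uu ε T r ≤ VV ε T r := by
  have h1 : uu ε T r = Real.sqrt ((uu ε T r) ^ 2) := by
    rw [Real.sqrt_sq (uu_pos hε hε' hT r).le]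
  rw [h1]; unfold VV
  rw [← h1]
  nth_rewrite 1 [h1]
  exact Real.sqrt_le_sqrt (by nlinarith)

lemma VV_ub (hε : 0 < ε) (hε' : ε ≤ 1 / 1000) (hT : 1 ≤ T) (r : ℝ) :
    VV ε T r ≤ uu ε T r + 3 * ε := by
  have hu := uu_ge hε hε' hT r
  have h2 : (uu ε T r) ^ 2 + 4 * ε ≤ (uu ε T r + 3 * ε) ^ 2 := by nlinarith
  calc VV ε T r ≤ Real.sqrt ((uu ε T r + 3 * ε) ^ 2) := Real.sqrt_le_sqrt h2
    _ = uu ε T r + 3 * ε := Real.sqrt_sq (by nlinarith)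

lemma VV_sq (hε : 0 < ε) (r : ℝ) : (VV ε T r) ^ 2 = (uu ε T r) ^ 2 + 4 * ε :=
  Real.sq_sqrt (by positivity)

lemma DD_lb (hε : 0 < ε) (hε' : ε ≤ 1 / 1000) (hT : 1 ≤ T) (r : ℝ) :
    2 * (1 + T * r ^ 2) ≤ DD ε T r := by
  have := VV_lb hε hε' hT r
  unfold DD uu at *; nlinarith

lemma DD_ub (hε : 0 < ε) (hε' : ε ≤ 1 / 1000) (hT : 1 ≤ T) (r : ℝ) :
    DD ε T r ≤ 2 * (1 + T * r ^ 2) + 3 * ε := by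
  have := VV_ub hε hε' hT r
  unfold DD uu at *; nlinarith

lemma DD_pos (hε : 0 < ε) (hε' : ε ≤ 1 / 1000) (hT : 1 ≤ T) (r : ℝ) :
    0 < DD ε T r := by
  have := DD_lb hε hε' hT r
  nlinarith [sq_nonneg r]

lemma NN_pos (hε : 0 < ε) (hT : 1 ≤ T) (r : ℝ) : 0 < 1 + T + T * r ^ 2 := by
  nlinarith [sq_nonneg r]

lemma qq_sq (hε : 0 < ε) (hε' : ε ≤ 1 / 1000) (hT : 1 ≤ T) (r : ℝ) :
    (qq ε T r) ^ 2 = 2 * (1 + T + T * r ^ 2) / DD ε T r :=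
  Real.sq_sqrt (div_nonneg (by nlinarith [NN_pos hε hT r]) (DD_pos hε hε' hT r).le)

lemma qq_pos (hε : 0 < ε) (hε' : ε ≤ 1 / 1000) (hT : 1 ≤ T) (r : ℝ) :
    0 < qq ε T r :=
  Real.sqrt_pos.mpr (div_pos (by nlinarith [NN_pos hε hT r]) (DD_pos hε hε' hT r))

lemma qq_ub (hε : 0 < ε) (hε' : ε ≤ 1 / 1000) (hT : 1 ≤ T) (r : ℝ) :
    qq ε T r * (1 + T * r ^ 2) ≤ 1 + T + T * r ^ 2 := by
  have hs : 0 < 1 + T * r ^ 2 := by nlinarith [sq_nonneg r]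
  have hN := NN_pos hε hT r
  have hD := DD_pos hε hε' hT r
  have hDlb := DD_lb hε hε' hT r
  have h1 : 2 * (1 + T + T * r ^ 2) / DD ε T r ≤
      ((1 + T + T * r ^ 2) / (1 + T * r ^ 2)) ^ 2 := by
    rw [div_pow, div_le_div_iff₀ hD (by positivity)]
    have hr : 1 + T * r ^ 2 ≤ 1 + T + T * r ^ 2 := by nlinarith
    nlinarith [mul_le_mul hr hDlb (by positivity) hN.le]
  have h2 : qq ε T r ≤ (1 + T + T * r ^ 2) / (1 + T * r ^ 2) := by
    calc qq ε T r ≤ Real.sqrt (((1 + T + T * r ^ 2) / (1 + T * r ^ 2)) ^ 2) :=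
          Real.sqrt_le_sqrt h1
      _ = _ := Real.sqrt_sq (by positivity)
    
  calc qq ε T r * (1 + T * r ^ 2) ≤ ((1 + T + T * r ^ 2) / (1 + T * r ^ 2)) * (1 + T * r ^ 2) := by
        exact mul_le_mul_of_nonneg_right h2 hs.le
    _ = 1 + T + T * r ^ 2 := by field_simp

lemma step2' {ε T : ℝ} (hε : 0 < ε) (hε' : ε ≤ 1 / 1000) (hT : 1 ≤ T) (s t : ℝ)
    (hs : 0 ≤ s) (ht : 0 ≤ t) :
    (((1 - ε) + (T - ε) * t) + ((1 - ε) + (T - ε) * s) + 6 * ε) *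
        (T ^ 2 / 2 - ε + T * (((1 - ε) + (T - ε) * s) + 3 * ε))
      ≤ (1 + T + T * s) * (T - ε) * (((1 - ε) + (T - ε) * t) + ((1 - ε) + (T - ε) * s)) := by
  have hTe : (0:ℝ) ≤ T - ε := by nlinarith
  have p1 : 0 ≤ ((T - ε) * s) * (T ^ 2 / 2 - 9 * ε * T) :=
    mul_nonneg (mul_nonneg hTe hs) (by nlinarith)
  have p2 : 0 ≤ ((T - ε) * t) * (T ^ 2 / 2 - 3 * ε * T) :=
    mul_nonneg (mul_nonneg hTe ht) (by nlinarith)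
  have q1 : ε * T ≤ (1 / 1000) * T := by nlinarith
  have q2 : ε * T ^ 2 ≤ (1 / 1000) * T ^ 2 := by nlinarith [sq_nonneg T]
  have q3 : ε * (ε * T) ≤ (1 / 1000) * ((1 / 1000) * T) := by nlinarith
  have q4 : ε * (ε * T ^ 2) ≤ (1 / 1000) * ((1 / 1000) * T ^ 2) := by nlinarith [sq_nonneg T]
  have q5 : (1:ℝ) ≤ T ^ 2 := by nlinarith
  nlinarith [p1, p2, q1, q2, q3, q4, q5]

lemma F_lb {ε T : ℝ} (hε : 0 < ε) (hε' : ε ≤ 1 / 1000) (hT : 1 ≤ T) {x y : ℝ}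
    (hx : 0 ≤ x) (hxy : x ≤ y) :
    (3 / 2) * T ^ 2 * (y ^ 2 - x ^ 2)
      ≤ (1 + T + T * x ^ 2) * DD ε T y - (1 + T + T * y ^ 2) * DD ε T x := by
  have hVx2 := VV_sq (T := T) hε x
  have hVy2 := VV_sq (T := T) hε y
  have hVxl := VV_lb hε hε' hT x
  have hVxu := VV_ub hε hε' hT x
  have hVyl := VV_lb hε hε' hT y
  have hVyu := VV_ub hε hε' hT y
  have hux := uu_ge hε hε' hT x
  have huy := uu_ge hε hε' hT y
  have hst : x ^ 2 ≤ y ^ 2 := by nlinarith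
  have hVpos : 0 < VV ε T y + VV ε T x := by linarith
  have hP : (3 / 2) * T ^ 2 * (VV ε T y + VV ε T x)
      ≤ (T ^ 2 + ε) * (VV ε T y + VV ε T x)
          + (1 + T + T * x ^ 2) * (T - ε) * (uu ε T y + uu ε T x)
          - T * VV ε T x * (VV ε T y + VV ε T x) := by
    have hVxpos : 0 < VV ε T x := by linarith
    have hT2 : (1:ℝ) ≤ T ^ 2 := by nlinarith
    have hTVx0 : 0 ≤ T * VV ε T x := mul_nonneg (by linarith) hVxpos.le
    have hTVx : T * VV ε T x ≤ T * (uu ε T x + 3 * ε) :=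
      mul_le_mul_of_nonneg_left hVxu (by linarith)
    have step1 : (VV ε T y + VV ε T x) * (T ^ 2 / 2 - ε + T * VV ε T x)
        ≤ (uu ε T y + uu ε T x + 6 * ε) * (T ^ 2 / 2 - ε + T * (uu ε T x + 3 * ε)) := by
      apply mul_le_mul (by linarith) (by linarith) (by linarith) (by linarith)
    have step2 : (uu ε T y + uu ε T x + 6 * ε) * (T ^ 2 / 2 - ε + T * (uu ε T x + 3 * ε))
        ≤ (1 + T + T * x ^ 2) * (T - ε) * (uu ε T y + uu ε T x) := by
      unfold uu
      exact step2' hε hε' hT (x ^ 2) (y ^ 2) (sq_nonneg x) (sq_nonneg y)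
    nlinarith [step1.trans step2]
  have hid : ((1 + T + T * x ^ 2) * DD ε T y - (1 + T + T * y ^ 2) * DD ε T x) *
        (VV ε T y + VV ε T x)
      = (y ^ 2 - x ^ 2) * ((T ^ 2 + ε) * (VV ε T y + VV ε T x)
          + (1 + T + T * x ^ 2) * (T - ε) * (uu ε T y + uu ε T x)
          - T * VV ε T x * (VV ε T y + VV ε T x)) := by
    unfold DD
    unfold uu at hVx2 hVy2 ⊢
    linear_combination (1 + T + T * x ^ 2) * hVy2 +
      (T * (y ^ 2 - x ^ 2) - (1 + T + T * y ^ 2)) * hVx2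
  have h := mul_le_mul_of_nonneg_left hP (by linarith : (0:ℝ) ≤ y ^ 2 - x ^ 2)
  rw [← hid] at h
  nlinarith [h, hVpos]

lemma qq_key {ε T : ℝ} (hε : 0 < ε) (hε' : ε ≤ 1 / 1000) (hT : 1 ≤ T) {x y : ℝ}
    (hx : 0 ≤ x) (hxy : x ≤ y) :
    qq ε T y + T ^ 2 * (y - x) * x / (2 * (1 + T + T * y ^ 2) ^ 2) ≤ qq ε T x := by
  have hy : 0 ≤ y := hx.trans hxy
  have hDx := DD_pos hε hε' hT x
  have hDy := DD_pos hε hε' hT y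
  have hDxu := DD_ub hε hε' hT x
  have hDyu := DD_ub hε hε' hT y
  have hqx := qq_pos hε hε' hT x
  have hqy := qq_pos hε hε' hT y
  have hqxu := qq_ub hε hε' hT x
  have hqyu := qq_ub hε hε' hT y
  have hNx := NN_pos (T := T) hε hT x
  have hNy := NN_pos (T := T) hε hT y
  have hsx1 : (1:ℝ) ≤ 1 + T * x ^ 2 := by nlinarith [sq_nonneg x]
  have hsy1 : (1:ℝ) ≤ 1 + T * y ^ 2 := by nlinarith [sq_nonneg y]
  have hsx : (0:ℝ) < 1 + T * x ^ 2 := by linarith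
  have hsy : (0:ℝ) < 1 + T * y ^ 2 := by linarith
  have hst : x ^ 2 ≤ y ^ 2 := by nlinarith
  have hF := F_lb hε hε' hT hx hxy
  -- q difference identity
  have hdq : (qq ε T x - qq ε T y) * ((qq ε T x + qq ε T y) * (DD ε T x * DD ε T y))
      = 2 * ((1 + T + T * x ^ 2) * DD ε T y - (1 + T + T * y ^ 2) * DD ε T x) := by
    have h1 := qq_sq hε hε' hT x
    have h2 := qq_sq hε hε' hT y
    have e1 : (qq ε T x) ^ 2 * (DD ε T x * DD ε T y)
        = 2 * (1 + T + T * x ^ 2) * DD ε T y := by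
      rw [h1]; field_simp
    have e2 : (qq ε T y) ^ 2 * (DD ε T x * DD ε T y)
        = 2 * (1 + T + T * y ^ 2) * DD ε T x := by
      rw [h2]; field_simp
    linear_combination e1 - e2
  have hMpos : 0 < (qq ε T x + qq ε T y) * (DD ε T x * DD ε T y) := by positivity
  have hqdiff : 0 ≤ qq ε T x - qq ε T y := by
    nlinarith [hdq, hF, hMpos, mul_nonneg (sq_nonneg T) (sub_nonneg.2 hst)]
  -- upper bound on M
  have hDx3 : DD ε T x ≤ (201 / 100) * (1 + T * x ^ 2) := by linarith [hDxu, hsx1, hε']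
  have hDy3 : DD ε T y ≤ (201 / 100) * (1 + T * y ^ 2) := by linarith [hDyu, hsy1, hε']
  have hAx : qq ε T x * DD ε T x ≤ (201 / 100) * (1 + T + T * x ^ 2) := by
    calc qq ε T x * DD ε T x ≤ qq ε T x * ((201 / 100) * (1 + T * x ^ 2)) :=
          mul_le_mul_of_nonneg_left hDx3 hqx.le
      _ = (201 / 100) * (qq ε T x * (1 + T * x ^ 2)) := by ring
      _ ≤ (201 / 100) * (1 + T + T * x ^ 2) := by linarith [hqxu]
  have hAy : qq ε T y * DD ε T y ≤ (201 / 100) * (1 + T + T * y ^ 2) := by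
    calc qq ε T y * DD ε T y ≤ qq ε T y * ((201 / 100) * (1 + T * y ^ 2)) :=
          mul_le_mul_of_nonneg_left hDy3 hqy.le
      _ = (201 / 100) * (qq ε T y * (1 + T * y ^ 2)) := by ring
      _ ≤ (201 / 100) * (1 + T + T * y ^ 2) := by linarith [hqyu]
  have hNxy : 1 + T + T * x ^ 2 ≤ 1 + T + T * y ^ 2 := by nlinarith [mul_le_mul_of_nonneg_left hst (by linarith : (0:ℝ) ≤ T)]
  have hsyN : 1 + T * y ^ 2 ≤ 1 + T + T * y ^ 2 := by linarith
  have hsxN : 1 + T * x ^ 2 ≤ 1 + T + T * y ^ 2 := by nlinarith [mul_le_mul_of_nonneg_left hst (by linarith : (0:ℝ) ≤ T)]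
  have hM_ub : (qq ε T x + qq ε T y) * (DD ε T x * DD ε T y)
      ≤ 12 * (1 + T + T * y ^ 2) ^ 2 := by
    have t1 : (qq ε T x * DD ε T x) * DD ε T y
        ≤ ((201 / 100) * (1 + T + T * x ^ 2)) * ((201 / 100) * (1 + T * y ^ 2)) :=
      mul_le_mul hAx hDy3 hDy.le (by positivity)
    have t2 : (qq ε T y * DD ε T y) * DD ε T x
        ≤ ((201 / 100) * (1 + T + T * y ^ 2)) * ((201 / 100) * (1 + T * x ^ 2)) :=
      mul_le_mul hAy hDx3 hDx.le (by positivity)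
    nlinarith [t1, t2, mul_le_mul hNxy hsyN hsy.le hNy.le,
      mul_le_mul_of_nonneg_left hsxN hNy.le]
  -- conclude
  have h2Ny : (0:ℝ) < 2 * (1 + T + T * y ^ 2) ^ 2 := by positivity
  have hgoal : T ^ 2 * (y - x) * x / (2 * (1 + T + T * y ^ 2) ^ 2)
      ≤ qq ε T x - qq ε T y := by
    rw [div_le_iff₀ h2Ny]
    nlinarith [hdq, hF, hM_ub, hqdiff, hNy,
      mul_le_mul_of_nonneg_left hM_ub hqdiff,
      mul_nonneg (mul_nonneg (sq_nonneg T) (sub_nonneg.2 hxy)) (sub_nonneg.2 hxy)]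
  linarith

lemma lam_eq {ε T : ℝ} (hε : 0 < ε) (hε' : ε ≤ 1 / 1000) (hT : 1 ≤ T) {r : ℝ} (hr : 0 ≤ r) :
    lamI ε T r = r * qq ε T r := by
  have hD := DD_pos hε hε' hT r
  have hV2 := VV_sq (T := T) hε r
  have hX : ((1 + ε) + (T + ε) * r ^ 2 - VV ε T r) / 2
      = ε * (r ^ 2 * (2 * (1 + T + T * r ^ 2) / DD ε T r)) := by
    have h2 : ε * (r ^ 2 * (2 * (1 + T + T * r ^ 2) / DD ε T r))
        = ε * (r ^ 2 * (2 * (1 + T + T * r ^ 2))) / DD ε T r := by ring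
    rw [h2, eq_div_iff hD.ne']
    unfold DD uu at *
    linear_combination (-(1 : ℝ) / 2) * hV2
  have h0 : lamI ε T r
      = (Real.sqrt ε)⁻¹ * Real.sqrt (((1 + ε) + (T + ε) * r ^ 2 - VV ε T r) / 2) := rfl
  rw [h0, hX, Real.sqrt_mul hε.le, Real.sqrt_mul (sq_nonneg r), Real.sqrt_sq hr]
  rw [inv_mul_cancel_left₀ (by positivity : Real.sqrt ε ≠ 0)]
  rfl

end

/-- `λ_i` is subadditive, and quantitatively for `0 ≤ a ≤ b`:
`λ_i(a)+λ_i(b)−λ_i(a+b) ≥ T²ab²/(2(1+T+T(a+b)²)²)`. -/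
theorem stmt6 (ε T : ℝ) (hε : 0 < ε) (hε' : ε ≤ 1 / 1000) (hT : 1 ≤ T) (hT' : T ≤ 100) :
    (∀ a b : ℝ, 0 ≤ a → 0 ≤ b → lamI ε T (a + b) ≤ lamI ε T a + lamI ε T b) ∧
    (∀ a b : ℝ, 0 ≤ a → a ≤ b →
      T ^ 2 * a * b ^ 2 / (2 * (1 + T + T * (a + b) ^ 2) ^ 2) ≤
        lamI ε T a + lamI ε T b - lamI ε T (a + b)) := by
  constructor
  · intro a b ha hb
    rw [lam_eq hε hε' hT ha, lam_eq hε hε' hT hb, lam_eq hε hε' hT (add_nonneg ha hb)]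
    have hnn1 : 0 ≤ T ^ 2 * ((a + b) - a) * a / (2 * (1 + T + T * (a + b) ^ 2) ^ 2) :=
      div_nonneg (mul_nonneg (mul_nonneg (sq_nonneg T) (by linarith)) ha) (by positivity)
    have hnn2 : 0 ≤ T ^ 2 * ((a + b) - b) * b / (2 * (1 + T + T * (a + b) ^ 2) ^ 2) :=
      div_nonneg (mul_nonneg (mul_nonneg (sq_nonneg T) (by linarith)) hb) (by positivity)
    have h1 : qq ε T (a + b) ≤ qq ε T a := by
      have := qq_key hε hε' hT ha (by linarith : a ≤ a + b)
      linarith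
    have h2 : qq ε T (a + b) ≤ qq ε T b := by
      have := qq_key hε hε' hT hb (by linarith : b ≤ a + b)
      linarith
    nlinarith [mul_le_mul_of_nonneg_left h1 ha, mul_le_mul_of_nonneg_left h2 hb]
  · intro a b ha hab
    have hb : 0 ≤ b := ha.trans hab
    have hc : 0 ≤ a + b := by linarith
    rw [lam_eq hε hε' hT ha, lam_eq hε hε' hT hb, lam_eq hε hε' hT hc]
    have hkey := qq_key hε hε' hT hb (by linarith : b ≤ a + b)
    have hnn1 : 0 ≤ T ^ 2 * ((a + b) - a) * a / (2 * (1 + T + T * (a + b) ^ 2) ^ 2) :=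
      div_nonneg (mul_nonneg (mul_nonneg (sq_nonneg T) (by linarith)) ha) (by positivity)
    have hmono : qq ε T (a + b) ≤ qq ε T a := by
      have := qq_key hε hε' hT ha (by linarith : a ≤ a + b)
      linarith
    have heq : T ^ 2 * a * b ^ 2 / (2 * (1 + T + T * (a + b) ^ 2) ^ 2)
        = b * (T ^ 2 * ((a + b) - b) * b / (2 * (1 + T + T * (a + b) ^ 2) ^ 2)) := by ring
    rw [heq]
    have h1 : b * (T ^ 2 * ((a + b) - b) * b / (2 * (1 + T + T * (a + b) ^ 2) ^ 2))
        ≤ b * (qq ε T b - qq ε T (a + b)) :=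
      mul_le_mul_of_nonneg_left (by linarith) hb
    have h2 : 0 ≤ a * (qq ε T a - qq ε T (a + b)) := mul_nonneg ha (by linarith)
    nlinarith [h1, h2]
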